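/- arXiv:1912.01781 — 8 statements merged into one kernel-verified Lean document; each statement's English description precedes it below -/
import Mathlib

section
/- Let b₁,…,bₙ be linearly independent vectors in Euclidean n-space such that ⟪bᵢ,bⱼ⟫ < 0 for all i ≠ j. Let v₁,…,vₙ be integers, not all zero, and suppose s = Σᵢ vᵢbᵢ is a shortest vector of the lattice generated by b₁,…,bₙ, i.e. ‖s‖ ≤ ‖x‖ for every nonzero lattice vector x. Then either vᵢ ≥ 0 for all i, or vᵢ ≤ 0 for all i. -/
open scoped RealInnerProductSpace

theorem stmt_0 (n : ℕ) (b : Fin n → EuclideanSpace ℝ (Fin n))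
    (hli : LinearIndependent ℝ b)
    (hobtuse : ∀ i j : Fin n, i ≠ j → ⟪b i, b j⟫ < 0)
    (v : Fin n → ℤ) (hv : v ≠ 0)
    (s : EuclideanSpace ℝ (Fin n)) (hs : s = ∑ i, (v i : ℝ) • b i)
    (hshort : ∀ u : Fin n → ℤ, (∑ i, (u i : ℝ) • b i) ≠ 0 →
      ‖s‖ ≤ ‖∑ i, (u i : ℝ) • b i‖) :
    (∀ i, 0 ≤ v i) ∨ (∀ i, v i ≤ 0) := by
  by_contra h
  push_neg at h
  obtain ⟨⟨i0, hi0⟩, ⟨j0, hj0⟩⟩ := h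
  have hij0 : i0 ≠ j0 := by
    intro he; rw [he] at hi0; omega
  set u : Fin n → ℤ := fun i => |v i| with hu
  set x : EuclideanSpace ℝ (Fin n) := ∑ i, ((u i : ℝ)) • b i with hx
  have hxne : x ≠ 0 := by
    intro h0
    rw [Fintype.linearIndependent_iff] at hli
    have := hli (fun i => (u i : ℝ)) h0 j0
    have : u j0 = 0 := by exact_mod_cast this
    simp only [hu, abs_eq_zero] at this
    omega
  have key : ∀ c : Fin n → ℝ,
      ⟪(∑ i, c i • b i : EuclideanSpace ℝ (Fin n)), ∑ i, c i • b i⟫ =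
        ∑ i, ∑ j, c i * c j * ⟪b i, b j⟫ := by
    intro c
    rw [sum_inner]
    refine Finset.sum_congr rfl fun i _ => ?_
    rw [inner_sum]
    refine Finset.sum_congr rfl fun j _ => ?_
    rw [real_inner_smul_left, real_inner_smul_right]; ring
  have hle : ∀ i j : Fin n,
      ((u i : ℝ) * (u j : ℝ)) * ⟪b i, b j⟫ ≤ ((v i : ℝ) * (v j : ℝ)) * ⟪b i, b j⟫ := by
    intro i j
    rcases eq_or_ne i j with rfl | hij
    · simp only [hu]
      push_cast
      rw [abs_mul_abs_self]
    · apply mul_le_mul_of_nonpos_right _ (hobtuse i j hij).le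
      have : (v i : ℝ) * v j ≤ |(v i : ℝ) * v j| := le_abs_self _
      rw [abs_mul] at this
      simpa [hu] using this
  have hltterm : ((u i0 : ℝ) * (u j0 : ℝ)) * ⟪b i0, b j0⟫ <
      ((v i0 : ℝ) * (v j0 : ℝ)) * ⟪b i0, b j0⟫ := by
    apply mul_lt_mul_of_neg_right _ (hobtuse i0 j0 hij0)
    have h1 : (v i0 : ℝ) * v j0 < 0 := by
      apply mul_neg_of_neg_of_pos
      · exact_mod_cast hi0
      · exact_mod_cast hj0
    have h2 : (0:ℝ) ≤ (u i0 : ℝ) * u j0 := by positivity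
    -- need v i0 * v j0 < u i0 * u j0
    calc ((v i0 : ℝ) * v j0) < 0 := h1
      _ ≤ _ := h2
  have hlt : ⟪x, x⟫ < ⟪s, s⟫ := by
    rw [hx, hs, key, key]
    apply Finset.sum_lt_sum
    · intro i _
      exact Finset.sum_le_sum fun j _ => hle i j
    · refine ⟨i0, Finset.mem_univ _, ?_⟩
      apply Finset.sum_lt_sum (fun j _ => hle i0 j)
      exact ⟨j0, Finset.mem_univ _, hltterm⟩
  have hns : ‖s‖ ≤ ‖x‖ := hshort u (hx ▸ hxne)
  have : ⟪s, s⟫ ≤ ⟪x, x⟫ := by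
    rw [real_inner_self_eq_norm_sq, real_inner_self_eq_norm_sq]
    have := mul_self_le_mul_self (norm_nonneg s) hns
    nlinarith [this]
  linarith
end

section
/- Let b₁,…,bₙ be vectors in Euclidean n-space with ⟪bᵢ,bⱼ⟫ ≤ 0 for all i ≠ j. Then for any real coefficients v₁,…,vₙ one has ‖Σᵢ |vᵢ| bᵢ‖ ≤ ‖Σᵢ vᵢ bᵢ‖. -/
open scoped RealInnerProductSpace

theorem stmt_1 (n : ℕ) (b : Fin n → EuclideanSpace ℝ (Fin n))
    (hobtuse : ∀ i j : Fin n, i ≠ j → ⟪b i, b j⟫ ≤ 0)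
    (v : Fin n → ℝ) :
    ‖∑ i, |v i| • b i‖ ≤ ‖∑ i, v i • b i‖ := by
  rw [@norm_eq_sqrt_real_inner, @norm_eq_sqrt_real_inner]
  apply Real.sqrt_le_sqrt
  rw [inner_sum, inner_sum]
  apply Finset.sum_le_sum
  intro j _
  rw [real_inner_smul_right, real_inner_smul_right, sum_inner, sum_inner,
    Finset.mul_sum, Finset.mul_sum]
  apply Finset.sum_le_sum
  intro i _
  rw [real_inner_smul_left, real_inner_smul_left]
  rcases eq_or_ne i j with rfl | hij
  · rw [← mul_assoc, ← mul_assoc, abs_mul_abs_self]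
  · have h := hobtuse i j hij
    have h2 : v j * v i ≤ |v j| * |v i| := by
      calc v j * v i ≤ |v j * v i| := le_abs_self _
        _ = |v j| * |v i| := abs_mul _ _
    nlinarith [h, h2]
end

section
/- Let b₁,…,bₙ be linearly independent vectors in Euclidean n-space with ⟪bᵢ,bⱼ⟫ ≤ 0 for all i ≠ j, and suppose the lattice generated by b₁,…,bₙ possesses a shortest nonzero vector s. Then there exists a shortest nonzero lattice vector of the form Σᵢ uᵢbᵢ with all integer coefficients uᵢ ≥ 0 (namely, if s = Σᵢ vᵢbᵢ, the vector Σᵢ |vᵢ| bᵢ is also a shortest nonzero lattice vector). -/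
open scoped RealInnerProductSpace

lemma norm_sq_sum_smul (n : ℕ) (b : Fin n → EuclideanSpace ℝ (Fin n)) (c : Fin n → ℝ) :
    ‖∑ i, c i • b i‖ ^ 2 = ∑ i, ∑ j, c i * c j * ⟪b i, b j⟫ := by
  rw [← real_inner_self_eq_norm_sq]
  simp only [sum_inner, inner_sum, real_inner_smul_left, real_inner_smul_right]
  refine Finset.sum_congr rfl fun i _ => Finset.sum_congr rfl fun j _ => by rw [real_inner_comm]; ring

theorem stmt_2 (n : ℕ) (b : Fin n → EuclideanSpace ℝ (Fin n))
    (hli : LinearIndependent ℝ b)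
    (hobtuse : ∀ i j : Fin n, i ≠ j → ⟪b i, b j⟫ ≤ 0)
    (v : Fin n → ℤ)
    (s : EuclideanSpace ℝ (Fin n)) (hs : s = ∑ i, (v i : ℝ) • b i)
    (hs0 : s ≠ 0)
    (hshort : ∀ u : Fin n → ℤ, (∑ i, (u i : ℝ) • b i) ≠ 0 →
      ‖s‖ ≤ ‖∑ i, (u i : ℝ) • b i‖) :
    ∃ u : Fin n → ℤ, (∀ i, 0 ≤ u i) ∧ (∀ i, u i = |v i|) ∧
      (∑ i, (u i : ℝ) • b i) ≠ 0 ∧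
      ∀ w : Fin n → ℤ, (∑ i, (w i : ℝ) • b i) ≠ 0 →
        ‖∑ i, (u i : ℝ) • b i‖ ≤ ‖∑ i, (w i : ℝ) • b i‖ := by
  refine ⟨fun i => |v i|, fun i => abs_nonneg _, fun i => rfl, ?_, ?_⟩
  · -- nonzero
    intro h
    apply hs0
    have hv : ∀ i, ((|v i| : ℤ) : ℝ) = 0 := by
      have := linearIndependent_iff'.mp hli Finset.univ (fun i => ((|v i| : ℤ) : ℝ)) h
      exact fun i => this i (Finset.mem_univ i)
    have hv' : ∀ i, (v i : ℝ) = 0 := by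
      intro i
      have h0 : |v i| = 0 := by exact_mod_cast hv i
      exact_mod_cast abs_eq_zero.mp h0
    simp [hs, hv']
  · intro w hw
    have key : ‖∑ i, ((|v i| : ℤ) : ℝ) • b i‖ ≤ ‖s‖ := by
      have h1 := norm_sq_sum_smul n b (fun i => ((|v i| : ℤ) : ℝ))
      have h2 := norm_sq_sum_smul n b (fun i => ((v i : ℤ) : ℝ))
      have hle : (∑ i, ∑ j, ((|v i| : ℤ) : ℝ) * ((|v j| : ℤ) : ℝ) * ⟪b i, b j⟫)
          ≤ ∑ i, ∑ j, ((v i : ℤ) : ℝ) * ((v j : ℤ) : ℝ) * ⟪b i, b j⟫ := by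
        refine Finset.sum_le_sum fun i _ => Finset.sum_le_sum fun j _ => ?_
        rcases eq_or_ne i j with rfl | hij
        · simp [Int.cast_abs, abs_mul_abs_self]
        · have hb := hobtuse i j hij
          have habs : ((v i : ℤ) : ℝ) * ((v j : ℤ) : ℝ)
              ≤ ((|v i| : ℤ) : ℝ) * ((|v j| : ℤ) : ℝ) := by
            push_cast [Int.cast_abs]
            calc ((v i : ℤ) : ℝ) * ((v j : ℤ) : ℝ) ≤ |((v i : ℤ) : ℝ) * ((v j : ℤ) : ℝ)| :=
                  le_abs_self _
              _ = |((v i : ℤ) : ℝ)| * |((v j : ℤ) : ℝ)| := abs_mul _ _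
          exact mul_le_mul_of_nonpos_right habs hb
      have : ‖∑ i, ((|v i| : ℤ) : ℝ) • b i‖ ^ 2 ≤ ‖s‖ ^ 2 := by
        rw [hs]; rw [h1]; rw [norm_sq_sum_smul]; exact hle
      nlinarith [norm_nonneg (∑ i, ((|v i| : ℤ) : ℝ) • b i), norm_nonneg s]
    exact le_trans key (hshort w hw)
end

section
/- Let n be odd with binom(n,2) ≡ 1 (mod 4). Let w : Fin n → Fin n → ℝ be symmetric with w i j ≠ 0 for all i ≠ j, let x be the number of unordered pairs {i,j}, i ≠ j, with w i j < 0 and y the number of unordered pairs with w i j > 0, and suppose x − y ≡ −1 (mod 4) as integers. Then there is no sign assignment ε : Fin n → ℝ with ε i ∈ {−1, 1} for all i such that ε i · ε j · w i j < 0 for all i ≠ j. -/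
open Finset in
private lemma aux_prod_pos_iff {α : Type*} [DecidableEq α] (s : Finset α) (f : α → ℝ)
    (h : ∀ a ∈ s, f a ≠ 0) :
    (0 < ∏ a ∈ s, f a) ↔ Even (s.filter (fun a => f a < 0)).card := by
  classical
  induction s using Finset.induction_on with
  | empty => simp
  | @insert a s ha ih =>
    have hfa : f a ≠ 0 := h a (mem_insert_self a s)
    have h' : ∀ b ∈ s, f b ≠ 0 := fun b hb => h b (mem_insert_of_mem hb)
    have hps : (∏ b ∈ s, f b) ≠ 0 := prod_ne_zero_iff.2 h'
    rw [Finset.prod_insert ha, Finset.filter_insert]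
    rcases hfa.lt_or_gt with hlt | hgt
    · rw [if_pos hlt,
        Finset.card_insert_of_notMem (fun hc => ha (mem_of_mem_filter _ hc)),
        Nat.even_add_one, ← ih h', mul_pos_iff]
      constructor
      · rintro (⟨h1, _⟩ | ⟨_, h2⟩)
        · exact absurd hlt (asymm h1)
        · intro hp; exact absurd h2 (asymm hp)
      · intro hne
        exact Or.inr ⟨hlt, (hps.lt_or_gt).resolve_right hne⟩
    · rw [if_neg (asymm hgt), ← ih h', mul_pos_iff]
      constructor
      · rintro (⟨_, h1⟩ | ⟨h2, _⟩)
        · exact h1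
        · exact absurd hgt (asymm h2)
      · intro hp; exact Or.inl ⟨hgt, hp⟩

theorem stmt_3 (n : ℕ) (hodd : Odd n) (hchoose : n.choose 2 % 4 = 1)
    (w : Fin n → Fin n → ℝ)
    (hsymm : ∀ i j, w i j = w j i)
    (hne : ∀ i j : Fin n, i ≠ j → w i j ≠ 0)
    (x y : ℕ)
    (hx : x = (Finset.univ.filter
      (fun p : Fin n × Fin n => p.1 < p.2 ∧ w p.1 p.2 < 0)).card)
    (hy : y = (Finset.univ.filter
      (fun p : Fin n × Fin n => p.1 < p.2 ∧ 0 < w p.1 p.2)).card)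
    (hmod : (x : ℤ) - (y : ℤ) ≡ -1 [ZMOD 4]) :
    ¬ ∃ ε : Fin n → ℝ, (∀ i, ε i = -1 ∨ ε i = 1) ∧
      ∀ i j : Fin n, i ≠ j → ε i * ε j * w i j < 0 := by
  classical
  rintro ⟨ε, hε, hneg⟩
  set S : Finset (Fin n × Fin n) :=
    Finset.univ.filter (fun p : Fin n × Fin n => p.1 < p.2) with hSdef
  have hSne : ∀ p ∈ S, w p.1 p.2 ≠ 0 := by
    intro p hp
    exact hne p.1 p.2 (ne_of_lt (Finset.mem_filter.1 hp).2)
  -- fibers of first and second projection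
  have hfib1 : ∀ b : Fin n, (S.filter (fun p => p.1 = b)).card = n - 1 - (b : ℕ) := by
    intro b
    have : S.filter (fun p => p.1 = b) = (Finset.Ioi b).image (fun j => (b, j)) := by
      ext p
      simp only [hSdef, Finset.mem_filter, Finset.mem_univ, true_and, Finset.mem_image,
        Finset.mem_Ioi]
      constructor
      · rintro ⟨hlt, rfl⟩
        exact ⟨p.2, hlt, rfl⟩
      · rintro ⟨j, hj, rfl⟩
        exact ⟨hj, rfl⟩
    rw [this, Finset.card_image_of_injective _ (fun a b h => by simpa using h),
      Fin.card_Ioi]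
  have hfib2 : ∀ b : Fin n, (S.filter (fun p => p.2 = b)).card = (b : ℕ) := by
    intro b
    have : S.filter (fun p => p.2 = b) = (Finset.Iio b).image (fun j => (j, b)) := by
      ext p
      simp only [hSdef, Finset.mem_filter, Finset.mem_univ, true_and, Finset.mem_image,
        Finset.mem_Iio]
      constructor
      · rintro ⟨hlt, rfl⟩
        exact ⟨p.1, hlt, rfl⟩
      · rintro ⟨j, hj, rfl⟩
        exact ⟨hj, rfl⟩
    rw [this, Finset.card_image_of_injective _ (fun a b h => by simpa using h),
      Fin.card_Iio]
  -- cardinality of S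
  have hcardS : S.card = n.choose 2 := by
    rw [Finset.card_eq_sum_card_fiberwise
      (f := Prod.fst) (t := Finset.univ) (fun p _ => Finset.mem_univ _)]
    have : ∀ b : Fin n, (S.filter (fun p => Prod.fst p = b)).card = n - 1 - (b : ℕ) :=
      hfib1
    rw [Finset.sum_congr rfl (fun b _ => this b), Fin.sum_univ_eq_sum_range
      (fun i => n - 1 - i), Finset.sum_range_reflect (fun i => i) n]
    simp [Finset.sum_range_id, Nat.choose_two_right]
  -- x + y = card S
  have hxy : x + y = S.card := by
    rw [hx, hy]
    have e1 : (Finset.univ.filter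
        (fun p : Fin n × Fin n => p.1 < p.2 ∧ w p.1 p.2 < 0)) =
        S.filter (fun p => w p.1 p.2 < 0) := by
      rw [hSdef, Finset.filter_filter]
    have e2 : (Finset.univ.filter
        (fun p : Fin n × Fin n => p.1 < p.2 ∧ 0 < w p.1 p.2)) =
        S.filter (fun p => ¬ w p.1 p.2 < 0) := by
      rw [hSdef, Finset.filter_filter]
      apply Finset.filter_congr
      intro p hp
      simp only [Finset.mem_univ] at hp ⊢
      constructor
      · rintro ⟨h1, h2⟩; exact ⟨h1, not_lt.2 h2.le⟩
      · rintro ⟨h1, h2⟩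
        exact ⟨h1, (hne p.1 p.2 (ne_of_lt h1)).lt_or_gt.resolve_left h2⟩
    rw [e1, e2, Finset.card_filter_add_card_filter_not]
  -- x is even
  have hxeven : Even x := by
    have h1 : ((x : ℤ) + y) % 4 = 1 := by
      have : ((x + y : ℕ) : ℤ) % 4 = ((n.choose 2 : ℕ) : ℤ) % 4 := by
        rw [hxy, hcardS]
      push_cast at this
      omega
    have h2 : ((x : ℤ) - y) % 4 = (-1 : ℤ) % 4 := hmod
    rw [Nat.even_iff]
    omega
  -- the product of the w's over S is positive
  have hP : 0 < ∏ p ∈ S, w p.1 p.2 := by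
    rw [aux_prod_pos_iff S _ hSne]
    have : S.filter (fun p => w p.1 p.2 < 0) =
        Finset.univ.filter (fun p : Fin n × Fin n => p.1 < p.2 ∧ w p.1 p.2 < 0) := by
      rw [hSdef, Finset.filter_filter]
    rw [this, ← hx]
    exact hxeven
  -- the sign part of the flipped product is 1
  have hsq : ∀ i : Fin n, ∀ k : ℕ, Even k → ε i ^ k = 1 := by
    intro i k hk
    rcases hε i with h | h <;> rw [h]
    · exact hk.neg_one_pow
    · exact one_pow k
  have hnm1 : Even (n - 1) := Nat.Odd.sub_odd hodd odd_one
  have hE : (∏ p ∈ S, ε p.1 * ε p.2) = 1 := by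
    rw [Finset.prod_mul_distrib]
    have e1 : (∏ p ∈ S, ε p.1) = ∏ b : Fin n, ε b ^ (n - 1 - (b : ℕ)) := by
      rw [← Finset.prod_fiberwise_of_maps_to
        (g := Prod.fst) (t := Finset.univ) (fun p _ => Finset.mem_univ _) (fun p => ε p.1)]
      refine Finset.prod_congr rfl (fun b _ => ?_)
      have hc : ∏ p ∈ S.filter (fun p => Prod.fst p = b), ε p.1
          = ∏ _p ∈ S.filter (fun p => Prod.fst p = b), ε b :=
        Finset.prod_congr rfl (fun p hp => by rw [(Finset.mem_filter.1 hp).2])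
      rw [hc, Finset.prod_const, hfib1 b]
    have e2 : (∏ p ∈ S, ε p.2) = ∏ b : Fin n, ε b ^ ((b : ℕ)) := by
      rw [← Finset.prod_fiberwise_of_maps_to
        (g := Prod.snd) (t := Finset.univ) (fun p _ => Finset.mem_univ _) (fun p => ε p.2)]
      refine Finset.prod_congr rfl (fun b _ => ?_)
      have hc : ∏ p ∈ S.filter (fun p => Prod.snd p = b), ε p.2
          = ∏ _p ∈ S.filter (fun p => Prod.snd p = b), ε b :=
        Finset.prod_congr rfl (fun p hp => by rw [(Finset.mem_filter.1 hp).2])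
      rw [hc, Finset.prod_const, hfib2 b]
    rw [e1, e2, ← Finset.prod_mul_distrib]
    refine Finset.prod_eq_one (fun b _ => ?_)
    rw [← pow_add]
    apply hsq
    have hb : (b : ℕ) < n := b.isLt
    have : n - 1 - (b : ℕ) + (b : ℕ) = n - 1 := by omega
    rw [this]
    exact hnm1
  -- the flipped product equals the original product, hence is positive
  have hQP : (∏ p ∈ S, ε p.1 * ε p.2 * w p.1 p.2) = ∏ p ∈ S, w p.1 p.2 := by
    rw [Finset.prod_mul_distrib, hE, one_mul]
  -- but the flipped product is negative since all factors are negative and |S| is odd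
  have hQneg : ¬ (0 < ∏ p ∈ S, ε p.1 * ε p.2 * w p.1 p.2) := by
    rw [aux_prod_pos_iff S _ (fun p hp =>
      ne_of_lt (hneg p.1 p.2 (ne_of_lt (Finset.mem_filter.1 hp).2)))]
    have : S.filter (fun p => ε p.1 * ε p.2 * w p.1 p.2 < 0) = S := by
      apply Finset.filter_true_of_mem
      intro p hp
      exact hneg p.1 p.2 (ne_of_lt (Finset.mem_filter.1 hp).2)
    rw [this, hcardS, Nat.even_iff]
    omega
  rw [hQP] at hQneg
  exact hQneg hP
end

section
/- Let n be odd and let w : Fin n → Fin n → ℝ be symmetric with w i j ≠ 0 for all i ≠ j. Fix a vertex k and define w' by w' i j = −(w i j) if k ∈ {i,j} and i ≠ j, and w' i j = w i j otherwise. Let x, y (respectively x', y') denote the number of unordered pairs {i,j}, i ≠ j, with negative, respectively positive, weight under w (respectively w'). Then x' − y' ≡ x − y (mod 4). -/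
theorem stmt_4 (n : ℕ) (hodd : Odd n)
    (w : Fin n → Fin n → ℝ)
    (hsymm : ∀ i j, w i j = w j i)
    (hne : ∀ i j : Fin n, i ≠ j → w i j ≠ 0)
    (k : Fin n)
    (w' : Fin n → Fin n → ℝ)
    (hw' : ∀ i j : Fin n,
      w' i j = if (i = k ∨ j = k) ∧ i ≠ j then -(w i j) else w i j)
    (x y x' y' : ℕ)
    (hx : x = (Finset.univ.filter
      (fun p : Fin n × Fin n => p.1 < p.2 ∧ w p.1 p.2 < 0)).card)
    (hy : y = (Finset.univ.filter
      (fun p : Fin n × Fin n => p.1 < p.2 ∧ 0 < w p.1 p.2)).card)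
    (hx' : x' = (Finset.univ.filter
      (fun p : Fin n × Fin n => p.1 < p.2 ∧ w' p.1 p.2 < 0)).card)
    (hy' : y' = (Finset.univ.filter
      (fun p : Fin n × Fin n => p.1 < p.2 ∧ 0 < w' p.1 p.2)).card) :
    (x' : ℤ) - (y' : ℤ) ≡ (x : ℤ) - (y : ℤ) [ZMOD 4] := by
  classical
  set A := Finset.univ.filter
    (fun p : Fin n × Fin n => p.1 < p.2 ∧ (p.1 = k ∨ p.2 = k) ∧ w p.1 p.2 < 0) with hA
  set B := Finset.univ.filter
    (fun p : Fin n × Fin n => p.1 < p.2 ∧ (p.1 = k ∨ p.2 = k) ∧ 0 < w p.1 p.2) with hB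
  set C := Finset.univ.filter
    (fun p : Fin n × Fin n => p.1 < p.2 ∧ ¬(p.1 = k ∨ p.2 = k) ∧ w p.1 p.2 < 0) with hC
  set D := Finset.univ.filter
    (fun p : Fin n × Fin n => p.1 < p.2 ∧ ¬(p.1 = k ∨ p.2 = k) ∧ 0 < w p.1 p.2) with hD
  -- w' behaviour
  have hw'val : ∀ p : Fin n × Fin n, p.1 < p.2 →
      w' p.1 p.2 = if p.1 = k ∨ p.2 = k then -(w p.1 p.2) else w p.1 p.2 := by
    intro p hp
    rw [hw']
    by_cases hq : p.1 = k ∨ p.2 = k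
    · simp [hq, ne_of_lt hp]
    · simp [hq]
  have hdisjAC : Disjoint A C := by
    rw [Finset.disjoint_left]; intro p hp hp'
    simp only [hA, hC, Finset.mem_filter] at hp hp'; tauto
  have hdisjBD : Disjoint B D := by
    rw [Finset.disjoint_left]; intro p hp hp'
    simp only [hB, hD, Finset.mem_filter] at hp hp'; tauto
  have hxeq : x = A.card + C.card := by
    rw [hx, ← Finset.card_union_of_disjoint hdisjAC]
    congr 1
    ext p
    simp only [hA, hC, Finset.mem_union, Finset.mem_filter, Finset.mem_univ, true_and]
    tauto
  have hyeq : y = B.card + D.card := by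
    rw [hy, ← Finset.card_union_of_disjoint hdisjBD]
    congr 1
    ext p
    simp only [hB, hD, Finset.mem_union, Finset.mem_filter, Finset.mem_univ, true_and]
    tauto
  have hdisjBC : Disjoint B C := by
    rw [Finset.disjoint_left]; intro p hp hp'
    simp only [hB, hC, Finset.mem_filter] at hp hp'; tauto
  have hdisjAD : Disjoint A D := by
    rw [Finset.disjoint_left]; intro p hp hp'
    simp only [hA, hD, Finset.mem_filter] at hp hp'; tauto
  have hx'eq : x' = B.card + C.card := by
    rw [hx', ← Finset.card_union_of_disjoint hdisjBC]
    congr 1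
    ext p
    simp only [hB, hC, Finset.mem_union, Finset.mem_filter, Finset.mem_univ, true_and]
    constructor
    · rintro ⟨hlt, hneg⟩
      rw [hw'val p hlt] at hneg
      by_cases hq : p.1 = k ∨ p.2 = k
      · left; rw [if_pos hq] at hneg; exact ⟨hlt, hq, by linarith⟩
      · right; rw [if_neg hq] at hneg; exact ⟨hlt, hq, hneg⟩
    · rintro (⟨hlt, hq, hpos⟩ | ⟨hlt, hq, hneg⟩)
      · refine ⟨hlt, ?_⟩; rw [hw'val p hlt, if_pos hq]; linarith
      · refine ⟨hlt, ?_⟩; rw [hw'val p hlt, if_neg hq]; exact hneg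
  have hy'eq : y' = A.card + D.card := by
    rw [hy', ← Finset.card_union_of_disjoint hdisjAD]
    congr 1
    ext p
    simp only [hA, hD, Finset.mem_union, Finset.mem_filter, Finset.mem_univ, true_and]
    constructor
    · rintro ⟨hlt, hpos⟩
      rw [hw'val p hlt] at hpos
      by_cases hq : p.1 = k ∨ p.2 = k
      · left; rw [if_pos hq] at hpos; exact ⟨hlt, hq, by linarith⟩
      · right; rw [if_neg hq] at hpos; exact ⟨hlt, hq, hpos⟩
    · rintro (⟨hlt, hq, hneg⟩ | ⟨hlt, hq, hpos⟩)
      · refine ⟨hlt, ?_⟩; rw [hw'val p hlt, if_pos hq]; linarith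
      · refine ⟨hlt, ?_⟩; rw [hw'val p hlt, if_neg hq]; exact hpos
  -- A ∪ B is the set of touching edges, of cardinality n - 1
  have hdisjAB : Disjoint A B := by
    rw [Finset.disjoint_left]; intro p hp hp'
    simp only [hA, hB, Finset.mem_filter] at hp hp'
    have := hp.2.2.2; have := hp'.2.2.2; linarith
  have hABunion : A ∪ B = Finset.univ.filter
      (fun p : Fin n × Fin n => p.1 < p.2 ∧ (p.1 = k ∨ p.2 = k)) := by
    ext p
    simp only [hA, hB, Finset.mem_union, Finset.mem_filter, Finset.mem_univ, true_and]
    constructor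
    · rintro (⟨hlt, hq, _⟩ | ⟨hlt, hq, _⟩) <;> exact ⟨hlt, hq⟩
    · rintro ⟨hlt, hq⟩
      rcases lt_or_gt_of_ne (hne p.1 p.2 (ne_of_lt hlt)) with h | h
      · exact Or.inl ⟨hlt, hq, h⟩
      · exact Or.inr ⟨hlt, hq, h⟩
  have hTcard : (Finset.univ.filter
      (fun p : Fin n × Fin n => p.1 < p.2 ∧ (p.1 = k ∨ p.2 = k))).card
      = (Finset.univ.erase k).card := by
    apply Finset.card_bij' (i := fun p _ => if p.1 = k then p.2 else p.1)
      (j := fun m _ => if k < m then (k, m) else (m, k))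
    · intro p hp
      simp only [Finset.mem_filter, Finset.mem_univ, true_and] at hp
      obtain ⟨hlt, hq⟩ := hp
      by_cases h1 : p.1 = k
      · simp only [h1, if_pos rfl, Finset.mem_erase, Finset.mem_univ, and_true]
        rw [← h1]; exact (ne_of_lt hlt).symm
      · simp only [if_neg h1, Finset.mem_erase, Finset.mem_univ, and_true]
        exact h1
    · intro m hm
      simp only [Finset.mem_erase, Finset.mem_univ, and_true] at hm
      by_cases h : k < m
      · simp only [if_pos h, Finset.mem_filter, Finset.mem_univ, true_and]
        exact ⟨h, Or.inl trivial⟩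
      · have h' : m < k := lt_of_le_of_ne (not_lt.mp h) hm
        simp only [if_neg h, Finset.mem_filter, Finset.mem_univ, true_and]
        exact ⟨h', Or.inr trivial⟩
    · intro p hp
      simp only [Finset.mem_filter, Finset.mem_univ, true_and] at hp
      obtain ⟨hlt, hq⟩ := hp
      by_cases h1 : p.1 = k
      · simp only [h1, if_pos rfl]
        rw [if_pos (h1 ▸ hlt)]
        exact Prod.ext h1.symm rfl
      · have h2 : p.2 = k := hq.resolve_left h1
        simp only [if_neg h1]
        rw [if_neg (by rw [← h2]; exact not_lt.mpr (le_of_lt hlt))]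
        exact Prod.ext rfl h2.symm
    · intro m hm
      simp only [Finset.mem_erase, Finset.mem_univ, and_true] at hm
      by_cases h : k < m
      · simp [h]
      · have h' : m ≠ k := hm
        simp [h, h']
  have hABcard : A.card + B.card = n - 1 := by
    rw [← Finset.card_union_of_disjoint hdisjAB, hABunion, hTcard]
    simp [Finset.card_erase_of_mem]
  -- finish with arithmetic mod 4
  have heven : Even (n - 1) := Nat.Odd.sub_odd hodd odd_one
  obtain ⟨t, ht⟩ := heven
  rw [Int.modEq_iff_dvd, hxeq, hyeq, hx'eq, hy'eq]
  have hAB' : A.card + B.card = t + t := by omega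
  refine ⟨(t : ℤ) - B.card, ?_⟩
  have : (A.card : ℤ) + B.card = t + t := by exact_mod_cast hAB'
  push_cast
  linarith
end

section
/- Let A be a real symmetric positive definite n×n matrix whose off-diagonal entries satisfy A i j ≤ 0 for all i ≠ j (an M-matrix). Then A is invertible and every entry of A⁻¹ is nonnegative. -/
open Matrix

theorem stmt_10 (n : ℕ) (A : Matrix (Fin n) (Fin n) ℝ)
    (hsymm : A.IsSymm) (hposdef : A.PosDef)
    (hoffdiag : ∀ i j : Fin n, i ≠ j → A i j ≤ 0) :
    IsUnit A.det ∧ ∀ i j, 0 ≤ A⁻¹ i j := by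
  have hdet : IsUnit A.det := isUnit_iff_ne_zero.2 hposdef.det_pos.ne'
  refine ⟨hdet, ?_⟩
  intro i j
  set x : Fin n → ℝ := fun k => A⁻¹ k j with hx
  have hAx : A *ᵥ x = Pi.single j 1 := by
    have hxe : x = A⁻¹ *ᵥ Pi.single j 1 := by
      funext k
      simp [hx, mulVec, dotProduct, Pi.single_apply]
    rw [hxe, mulVec_mulVec, Matrix.mul_nonsing_inv A hdet, one_mulVec]
  by_contra hneg
  push_neg at hneg
  set xm : Fin n → ℝ := fun k => max (-x k) 0 with hxm
  set xp : Fin n → ℝ := fun k => max (x k) 0 with hxp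
  have hxm_nonneg : ∀ k, 0 ≤ xm k := fun k => le_max_right _ _
  have hxp_nonneg : ∀ k, 0 ≤ xp k := fun k => le_max_right _ _
  have hsplit : x = fun k => xp k - xm k := by
    funext k
    simp only [hxp, hxm]
    rcases le_total (x k) 0 with h | h
    · rw [max_eq_right h, max_eq_left (by linarith)]; ring
    · rw [max_eq_left h, max_eq_right (by linarith)]; ring
  have hprod0 : ∀ k, xm k * xp k = 0 := by
    intro k
    rcases le_total (x k) 0 with h | h
    · simp [hxp, max_eq_right h]
    · simp [hxm, max_eq_right (by linarith : -x k ≤ 0)]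
  have hxmne : xm ≠ 0 := by
    intro h0
    have : xm i = 0 := congrFun h0 i
    have : max (-x i) 0 = 0 := this
    have hxi : x i < 0 := hneg
    have : -x i ≤ 0 := by
      rw [← this]; exact le_max_left _ _
    linarith
  have hpos : 0 < xm ⬝ᵥ (A *ᵥ xm) := by
    have := hposdef.dotProduct_mulVec_pos hxmne
    simpa using this
  have hcross : xm ⬝ᵥ (A *ᵥ xp) ≤ 0 := by
    rw [dotProduct, show (A *ᵥ xp) = fun i => ∑ k, A i k * xp k from rfl]
    apply Finset.sum_nonpos
    intro a _
    rw [Finset.mul_sum]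
    apply Finset.sum_nonpos
    intro b _
    rcases eq_or_ne a b with rfl | hab
    · have h1 : xm a * (A a a * xp a) = A a a * (xm a * xp a) := by ring
      rw [h1, hprod0, mul_zero]
    · have hA := hoffdiag a b hab
      exact mul_nonpos_of_nonneg_of_nonpos (hxm_nonneg a)
        (mul_nonpos_of_nonpos_of_nonneg hA (hxp_nonneg b))
  have hkey : xm ⬝ᵥ (A *ᵥ x) = xm j := by
    rw [hAx]
    simp [dotProduct, Pi.single_apply]
  have hexpand : xm ⬝ᵥ (A *ᵥ x) = xm ⬝ᵥ (A *ᵥ xp) - xm ⬝ᵥ (A *ᵥ xm) := by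
    have : x = xp - xm := by funext k; exact congrFun hsplit k
    rw [this, mulVec_sub, dotProduct_sub]
  have : xm j < 0 := by
    rw [← hkey, hexpand]; linarith
  exact absurd this (not_lt.2 (hxm_nonneg j))
end

section
/- Let b₁,…,b_d be linearly independent vectors in Euclidean n-space such that ⟪bᵢ,bⱼ⟫ ≤ 0 for all i ≠ j with i, j ≤ d−1. Then there exist integers v₁,…,v_{d−1} and a nonzero integer y such that the vector b' = y·b_d + Σ_{i<d} vᵢ·bᵢ satisfies ⟪b', bᵢ⟫ ≤ 0 for every i ≤ d−1. -/
open scoped RealInnerProductSpace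

theorem stmt_11 (n d : ℕ) (b : Fin (d + 1) → EuclideanSpace ℝ (Fin n))
    (hli : LinearIndependent ℝ b)
    (hobtuse : ∀ i j : Fin d, i ≠ j → ⟪b i.castSucc, b j.castSucc⟫ ≤ 0) :
    ∃ (v : Fin d → ℤ) (y : ℤ), y ≠ 0 ∧
      ∀ i : Fin d,
        ⟪(y : ℝ) • b (Fin.last d) + ∑ j, (v j : ℝ) • b j.castSucc,
          b i.castSucc⟫ ≤ 0 := by
  classical
  set b' : Fin d → EuclideanSpace ℝ (Fin n) := fun i => b i.castSucc with hb'
  have hli' : LinearIndependent ℝ b' := hli.comp _ (Fin.castSucc_injective d)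
  -- the linear map given by the Gram matrix
  set g : Fin d → Fin d → ℝ := fun j i => ⟪b' j, b' i⟫ with hg
  let L : (Fin d → ℝ) →ₗ[ℝ] (Fin d → ℝ) :=
    { toFun := fun c i => ∑ j, c j * g j i
      map_add' := by
        intro x y
        funext i
        simp [add_mul, Finset.sum_add_distrib]
      map_smul' := by
        intro m x
        funext i
        simp [Finset.mul_sum, mul_assoc] }
  have hLapply : ∀ c i, L c i = ⟪∑ j, c j • b' j, b' i⟫ := by
    intro c i
    simp [L, sum_inner, real_inner_smul_left, hg, Finset.mul_sum, mul_assoc]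
  have hinj : Function.Injective L := by
    rw [← LinearMap.ker_eq_bot, LinearMap.ker_eq_bot']
    intro c hc
    have hw : (∑ j, c j • b' j) = 0 := by
      have h0 : ⟪∑ j, c j • b' j, ∑ j, c j • b' j⟫ = 0 := by
        rw [inner_sum]
        refine Finset.sum_eq_zero fun i _ => ?_
        have := congrFun hc i
        rw [hLapply] at this
        simp only [Pi.zero_apply] at this
        rw [real_inner_smul_right, this, mul_zero]
      exact inner_self_eq_zero.mp h0
    have := Fintype.linearIndependent_iff.mp hli' c hw
    funext j; exact this j
  have hsurj : Function.Surjective L := LinearMap.injective_iff_surjective.mp hinj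
  obtain ⟨c, hc⟩ := hsurj (fun i => -(1 + ⟪b (Fin.last d), b' i⟫))
  set M : ℝ := ∑ i, ∑ j, |g j i| with hM
  have hM0 : 0 ≤ M := Finset.sum_nonneg fun i _ => Finset.sum_nonneg fun j _ => abs_nonneg _
  set y : ℤ := (⌈M⌉₊ : ℤ) + 1 with hy
  have hy0 : (0 : ℤ) < y := by positivity
  have hyM : M + 1 ≤ (y : ℝ) := by
    have : M ≤ (⌈M⌉₊ : ℝ) := Nat.le_ceil M
    push_cast [hy]
    linarith
  refine ⟨fun j => round ((y : ℝ) * c j), y, hy0.ne', fun i => ?_⟩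
  have hci := congrFun hc i
  rw [hLapply] at hci
  have hexp : ⟪(y : ℝ) • b (Fin.last d) + ∑ j, ((round ((y : ℝ) * c j) : ℝ)) • b' j, b' i⟫
      = (y : ℝ) * ⟪b (Fin.last d), b' i⟫
        + ∑ j, (round ((y : ℝ) * c j) : ℝ) * g j i := by
    rw [inner_add_left, real_inner_smul_left, sum_inner]
    simp [real_inner_smul_left, hg, Finset.mul_sum, mul_assoc]
  rw [hexp]
  have hci2 : ∑ j, c j * g j i = -(1 + ⟪b (Fin.last d), b' i⟫) := by
    rw [show (∑ j, c j * g j i) = L c i from rfl, hLapply]; exact hci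
  have hsplit : ∑ j, (round ((y : ℝ) * c j) : ℝ) * g j i
      = (∑ j, ((round ((y : ℝ) * c j) : ℝ) - (y : ℝ) * c j) * g j i)
        + (y : ℝ) * ∑ j, c j * g j i := by
    rw [Finset.mul_sum, ← Finset.sum_add_distrib]
    congr 1; funext j; ring
  have herr : (∑ j, ((round ((y : ℝ) * c j) : ℝ) - (y : ℝ) * c j) * g j i) ≤ M := by
    calc (∑ j, ((round ((y : ℝ) * c j) : ℝ) - (y : ℝ) * c j) * g j i)
        ≤ ∑ j, |((round ((y : ℝ) * c j) : ℝ) - (y : ℝ) * c j) * g j i| :=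
          Finset.sum_le_sum fun j _ => le_abs_self _
      _ ≤ ∑ j, |g j i| := by
          refine Finset.sum_le_sum fun j _ => ?_
          rw [abs_mul]
          have h1 : |((round ((y : ℝ) * c j) : ℝ) - (y : ℝ) * c j)| ≤ 1 / 2 := by
            rw [abs_sub_comm]; exact abs_sub_round _
          nlinarith [abs_nonneg (g j i), abs_nonneg ((round ((y : ℝ) * c j) : ℝ) - (y : ℝ) * c j)]
      _ ≤ M := by
          rw [hM]
          exact Finset.single_le_sum (f := fun i => ∑ j, |g j i|)
            (fun i _ => Finset.sum_nonneg fun j _ => abs_nonneg _) (Finset.mem_univ i)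
  rw [hsplit, hci2]
  nlinarith
end

section
/- Let b₁,…,bₙ be linearly independent vectors in Euclidean n-space and let Λ = {Σᵢ vᵢbᵢ : vᵢ ∈ ℤ} be the lattice they generate. Then there exist n linearly independent vectors b'₁,…,b'ₙ ∈ Λ with ⟪b'ᵢ, b'ⱼ⟫ ≤ 0 for all i ≠ j; that is, Λ contains an obtuse basis of a full-rank sublattice. -/
open scoped RealInnerProductSpace

set_option maxHeartbeats 1000000

lemma key (E : Type*) [NormedAddCommGroup E] [InnerProductSpace ℝ E] :
    ∀ (m : ℕ) (b : Fin m → E), LinearIndependent ℝ b →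
    ∃ b' : Fin m → E,
      (∀ i, ∃ u : Fin m → ℤ, b' i = ∑ j, (u j : ℝ) • b j) ∧
      LinearIndependent ℝ b' ∧
      ∀ i j, i ≠ j → ⟪b' i, b' j⟫ < 0 := by
  intro m
  induction m with
  | zero =>
    intro b hb
    exact ⟨b, fun i => i.elim0, hb, fun i => i.elim0⟩
  | succ m ih =>
    intro b hli
    set v : E := b 0 with hv
    have hv0 : v ≠ 0 := hli.ne_zero 0
    have hvvne : ⟪v, v⟫ ≠ 0 := inner_self_ne_zero.mpr hv0
    have hvv : (0:ℝ) < ⟪v, v⟫ := lt_of_le_of_ne real_inner_self_nonneg (Ne.symm hvvne)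
    set bs : Fin m → E := fun j => b j.succ with hbs
    set r : Fin m → ℝ := fun j => ⟪v, bs j⟫ / ⟪v, v⟫ with hr
    set c : Fin m → E := fun j => bs j - r j • v with hc
    have hvc : ∀ j, ⟪v, c j⟫ = 0 := by
      intro j
      simp only [hc, inner_sub_right, real_inner_smul_right, hr]
      field_simp
      ring
    -- linear independence of c
    have hc_li : LinearIndependent ℝ c := by
      rw [Fintype.linearIndependent_iff]
      intro a ha j
      have ha' : (∑ j, a j • bs j) - (∑ j, (a j * r j)) • v = 0 := by
        rw [← ha]
        simp only [hc, smul_sub, Finset.sum_sub_distrib, smul_smul, Finset.sum_smul]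
      set g : Fin (m+1) → ℝ := Fin.cases (-(∑ j, (a j * r j))) (fun j => a j) with hg
      have hsum : ∑ i, g i • b i = 0 := by
        rw [Fin.sum_univ_succ]
        simp only [hg, Fin.cases_zero, Fin.cases_succ]
        have heq : (-(∑ j, a j * r j)) • b 0 + ∑ i : Fin m, a i • b i.succ
            = (∑ j, a j • bs j) - (∑ j, (a j * r j)) • v := by
          rw [hv]
          have : ∀ i : Fin m, a i • b i.succ = a i • bs i := fun i => rfl
          rw [Finset.sum_congr rfl (fun i _ => this i), neg_smul]
          abel
        rw [heq, ha']
      have := Fintype.linearIndependent_iff.mp hli g hsum j.succ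
      simpa [hg] using this
    obtain ⟨c', hcu, hc'li, hc'obt⟩ := ih c hc_li
    choose u hu using hcu
    have hvc' : ∀ i, ⟪v, c' i⟫ = 0 := by
      intro i
      rw [hu i]
      simp [inner_sum, real_inner_smul_right, hvc]
    set s : Fin m → ℝ := fun i => ∑ j, (u i j : ℝ) * r j with hs
    set p : Fin m → E := fun i => ∑ j, (u i j : ℝ) • bs j with hp
    have hcp : ∀ i, c' i = p i - s i • v := by
      intro i
      rw [hu i]
      simp only [hc, hp, hs, smul_sub, Finset.sum_sub_distrib, smul_smul, Finset.sum_smul]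
    -- choose M
    set S : Finset ℝ := insert 1 (((Finset.univ : Finset (Fin m × Fin m)).filter
        (fun q => q.1 ≠ q.2)).image fun q => -⟪c' q.1, c' q.2⟫) with hS
    have hSne : S.Nonempty := ⟨1, Finset.mem_insert_self _ _⟩
    set ε : ℝ := S.min' hSne with hε
    have hε0 : 0 < ε := by
      have hmem : ε ∈ S := S.min'_mem hSne
      simp only [hS, Finset.mem_insert, Finset.mem_image, Finset.mem_filter] at hmem
      rcases hmem with h1 | ⟨q, ⟨-, hq⟩, hq2⟩
      · rw [h1]; norm_num
      · have := hc'obt q.1 q.2 hq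
        rw [← hq2]; linarith
    have hεle : ∀ i j, i ≠ j → ε ≤ -⟪c' i, c' j⟫ := by
      intro i j hij
      apply Finset.min'_le
      rw [hS]
      exact Finset.mem_insert_of_mem (Finset.mem_image.mpr
        ⟨(i, j), Finset.mem_filter.mpr ⟨Finset.mem_univ _, hij⟩, rfl⟩)
    obtain ⟨M, hM⟩ := exists_nat_gt (max 1 (⟪v, v⟫ / ε))
    have hM1 : (1:ℝ) ≤ M := le_of_lt (lt_of_le_of_lt (le_max_left _ _) hM)
    have hMε : ⟪v, v⟫ < (M:ℝ) * ε := by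
      have h2 : ⟪v, v⟫ / ε < M := lt_of_le_of_lt (le_max_right _ _) hM
      calc ⟪v, v⟫ = (⟪v, v⟫ / ε) * ε := by
            rw [div_mul_cancel₀ _ (ne_of_gt hε0)]
        _ < (M:ℝ) * ε := mul_lt_mul_of_pos_right h2 hε0
    set k : Fin m → ℤ := fun i => -⌊(M:ℝ) * s i⌋ - 1 with hk
    set σ : Fin m → ℝ := fun i => (M:ℝ) * s i + (k i : ℝ) with hσ
    have hσb : ∀ i, -1 ≤ σ i ∧ σ i < 0 := by
      intro i
      simp only [hσ, hk]
      push_cast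
      constructor
      · have := Int.floor_le ((M:ℝ) * s i); linarith
      · have := Int.lt_floor_add_one ((M:ℝ) * s i); linarith
    set w : Fin (m+1) → E := Fin.cases v (fun i => (M:ℝ) • c' i + σ i • v) with hw
    have hw0 : w 0 = v := rfl
    have hwsucc : ∀ i, w i.succ = (M:ℝ) • c' i + σ i • v := fun i => rfl
    have hcv' : ∀ i, ⟪c' i, v⟫ = 0 := fun i => by rw [real_inner_comm]; exact hvc' i
    have hinner : ∀ i j, ⟪w i.succ, w j.succ⟫ =
        (M:ℝ)^2 * ⟪c' i, c' j⟫ + σ i * σ j * ⟪v, v⟫ := by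
      intro i j
      rw [hwsucc, hwsucc]
      simp only [inner_add_left, inner_add_right, real_inner_smul_left, real_inner_smul_right,
        hvc', hcv', mul_zero, add_zero, zero_add]
      ring
    have hinner0 : ∀ j, ⟪w 0, w j.succ⟫ = σ j * ⟪v, v⟫ := by
      intro j
      rw [hw0, hwsucc]
      simp only [inner_add_right, real_inner_smul_right, hvc']
      ring
    refine ⟨w, ?_, ?_, ?_⟩
    · -- integer combinations
      intro i
      rcases Fin.eq_zero_or_eq_succ i with rfl | ⟨i, rfl⟩
      · refine ⟨(Fin.cases 1 (fun _ => 0) : Fin (m+1) → ℤ), ?_⟩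
        rw [hw0]
        rw [Fin.sum_univ_succ]
        simp
        exact hv
      · refine ⟨(Fin.cases (k i) (fun j => (M : ℤ) * u i j) : Fin (m+1) → ℤ), ?_⟩
        rw [hwsucc, Fin.sum_univ_succ]
        simp only [Fin.cases_zero, Fin.cases_succ]
        push_cast
        rw [hcp]
        simp only [hp, Finset.smul_sum, smul_smul, Finset.sum_congr]
        have : ∀ j : Fin m, ((M:ℝ) * (u i j)) • b j.succ = (M:ℝ) • ((u i j : ℝ) • bs j) := by
          intro j; rw [smul_smul, hbs]
        rw [Finset.sum_congr rfl (fun j _ => this j)]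
        rw [← Finset.smul_sum]
        simp only [hσ]
        module
    · -- linear independence
      rw [Fintype.linearIndependent_iff]
      intro g hg
      rw [Fin.sum_univ_succ, hw0] at hg
      simp only [hwsucc] at hg
      set A : ℝ := g 0 + ∑ j, g j.succ * σ j with hA
      have hg' : A • v + ∑ j, (g j.succ * M) • c' j = 0 := by
        rw [← hg, hA]
        rw [add_smul, Finset.sum_smul]
        have : ∀ j : Fin m, g j.succ • ((M:ℝ) • c' j + σ j • v)
            = (g j.succ * M) • c' j + (g j.succ * σ j) • v := by
          intro j; module
        rw [Finset.sum_congr rfl (fun j _ => this j), Finset.sum_add_distrib]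
        abel
      have hA0 : A = 0 := by
        have h := congrArg (fun x => ⟪v, x⟫) hg'
        simp only [inner_add_right, inner_sum, real_inner_smul_right, hvc',
          mul_zero, Finset.sum_const_zero, add_zero, inner_zero_right] at h
        exact (mul_eq_zero.mp h).resolve_right hvvne
      have h2 : ∑ j, (g j.succ * M) • c' j = 0 := by
        rw [hA0, zero_smul, zero_add] at hg'; exact hg'
      have hgs : ∀ j : Fin m, g j.succ = 0 := by
        intro j
        have := Fintype.linearIndependent_iff.mp hc'li (fun j => g j.succ * (M:ℝ)) h2 j
        have hMne : (M:ℝ) ≠ 0 := by linarith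
        exact (mul_eq_zero.mp this).resolve_right hMne
      have hg0 : g 0 = 0 := by
        have : (∑ j, g j.succ * σ j) = 0 := by
          simp [hgs]
        rw [hA, this, add_zero] at hA0; exact hA0
      exact fun i => Fin.cases hg0 hgs i
    · -- obtuseness
      intro i j hij
      rcases Fin.eq_zero_or_eq_succ i with rfl | ⟨i, rfl⟩ <;>
        rcases Fin.eq_zero_or_eq_succ j with rfl | ⟨j, rfl⟩
      · exact absurd rfl hij
      · rw [hinner0]
        exact mul_neg_of_neg_of_pos (hσb j).2 hvv
      · rw [real_inner_comm, hinner0]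
        exact mul_neg_of_neg_of_pos (hσb i).2 hvv
      · have hij' : i ≠ j := fun h => hij (by rw [h])
        rw [hinner i j]
        have h1 := hεle i j hij'
        have h3 := hσb i
        have h4 := hσb j
        have hσσ : σ i * σ j ≤ 1 := by nlinarith [h3.1, h3.2, h4.1, h4.2]
        have hσσ0 : 0 ≤ σ i * σ j := by nlinarith [h3.2, h4.2]
        have hstep1 : σ i * σ j * ⟪v, v⟫ ≤ ⟪v, v⟫ := by
          have := mul_le_mul_of_nonneg_right hσσ (le_of_lt hvv)
          linarith
        have hstep2 : (M:ℝ)^2 * ⟪c' i, c' j⟫ ≤ -((M:ℝ)^2 * ε) := by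
          have h5 : ⟪c' i, c' j⟫ ≤ -ε := by linarith
          have := mul_le_mul_of_nonneg_left h5 (sq_nonneg (M:ℝ))
          linarith [this]
        have hstep3 : (M:ℝ) * ε ≤ (M:ℝ)^2 * ε := by
          have hMM : (M:ℝ) ≤ (M:ℝ)^2 := by nlinarith [hM1]
          exact mul_le_mul_of_nonneg_right hMM (le_of_lt hε0)
        linarith

theorem stmt_12 (n : ℕ) (b : Fin n → EuclideanSpace ℝ (Fin n))
    (hli : LinearIndependent ℝ b) :
    ∃ b' : Fin n → EuclideanSpace ℝ (Fin n),
      (∀ i, ∃ u : Fin n → ℤ, b' i = ∑ j, (u j : ℝ) • b j) ∧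
      LinearIndependent ℝ b' ∧
      ∀ i j : Fin n, i ≠ j → ⟪b' i, b' j⟫ ≤ 0 := by
  obtain ⟨b', h1, h2, h3⟩ := key (EuclideanSpace ℝ (Fin n)) n b hli
  exact ⟨b', h1, h2, fun i j hij => le_of_lt (h3 i j hij)⟩
end
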